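/- Suppose b₁...bₙ immediately follows a₁...aₙ in the full Gray code of words, with k the unique index where they differ. If b_k = a_k + 1 and a₁...aₙ is arc-disconnected, then b₁...bₙ is arc-disconnected; if b_k = a_k − 1 and a₁...aₙ is arc-connected, then b₁...bₙ is arc-connected. -/

import Mathlib

/-- The full Gray code of words: for `n = 0` the single empty word; words of
the length-`n` code at even (0-indexed, i.e. odd 1-indexed) positions are
extended by last letters `1, 2, …, 2(n+1)-1` in increasing order, those at odd
(0-indexed) positions by the same last letters in decreasing order. -/
def grayCode : ℕ → List (List ℕ)
  | 0 => [[]]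
  | n+1 =>
      (((grayCode n).zipIdx.map Prod.swap).map (fun p =>
        if p.1 % 2 = 0 then
          (List.range (2*n + 1)).map (fun j => p.2 ++ [j + 1])
        else
          ((List.range (2*n + 1)).map (fun j => p.2 ++ [j + 1])).reverse)).flatten

/-- The 1-indexed `i`-th letter of a word. -/
def wd (a : List ℕ) (i : ℕ) : ℕ := a.getD (i - 1) 0

/-- A word `a₁…aₙ` is arc-disconnected if there is a `k ≥ 2` with
`a_k = 2k-1` and `a_j ≥ 2k-1` for all `j > k`. -/
def ArcDiscL (a : List ℕ) : Prop :=
  ∃ k, 2 ≤ k ∧ k ≤ a.length ∧ wd a k = 2*k - 1 ∧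
    ∀ j, k < j → j ≤ a.length → 2*k - 1 ≤ wd a j

lemma gray_shape : ∀ n, ∀ w ∈ grayCode n, w.length = n ∧ ∀ i, i < n → w.getD i 0 ≤ 2*i + 1 := by
  intro n
  induction n with
  | zero => intro w hw; simp [grayCode] at hw; subst hw; simp
  | succ n ih =>
    intro w hw
    simp only [grayCode, List.mem_flatten, List.mem_map] at hw
    obtain ⟨l, ⟨p, hp, rfl⟩, hwl⟩ := hw
    have hmem : w ∈ (List.range (2*n+1)).map (fun j => p.2 ++ [j+1]) := by
      split at hwl
      · exact hwl
      · exact List.mem_reverse.mp hwl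
    obtain ⟨j, hj, rfl⟩ := List.mem_map.mp hmem
    have hj' : j < 2*n+1 := List.mem_range.mp hj
    have hp2 : p.2 ∈ grayCode n := by
      obtain ⟨i, x⟩ := p
      obtain ⟨q, hq, hqe⟩ := hp
      rw [← hqe]
      exact List.fst_mem_of_mem_zipIdx hq
    obtain ⟨hlen, hbd⟩ := ih p.2 hp2
    constructor
    · simp [hlen]
    · intro i hi
      rcases lt_or_eq_of_le (Nat.lt_succ_iff.mp hi) with h | h
      · have : i < p.2.length := by omega
        rw [List.getD_eq_getElem?_getD, List.getElem?_append, if_pos this,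
            ← List.getD_eq_getElem?_getD]
        exact hbd i h
      · have : (p.2 ++ [j+1]).getD i 0 = j + 1 := by
          rw [List.getD_eq_getElem?_getD, List.getElem?_append_right (by omega)]
          simp [hlen, ← h]
        omega

/-- Let `b` immediately follow `a` in the full Gray code, with
`k` the unique differing position. If `b_k = a_k + 1` and `a` is
arc-disconnected, then so is `b`; if `b_k = a_k - 1` and `a` is arc-connected,
then so is `b`. -/
theorem stmt_14 (n m : ℕ) (a b : List ℕ)
    (ha : (grayCode n)[m]? = some a) (hb : (grayCode n)[m+1]? = some b)
    (k : ℕ) (hk : wd b k ≠ wd a k) (hagree : ∀ j, j ≠ k → wd b j = wd a j) :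
    (wd b k = wd a k + 1 → ArcDiscL a → ArcDiscL b) ∧
    (wd a k = wd b k + 1 → ¬ ArcDiscL a → ¬ ArcDiscL b) := by
  have hma : a ∈ grayCode n := List.mem_of_getElem? ha
  have hmb : b ∈ grayCode n := List.mem_of_getElem? hb
  obtain ⟨hla, hbda⟩ := gray_shape n a hma
  obtain ⟨hlb, hbdb⟩ := gray_shape n b hmb
  constructor
  · rintro h1 ⟨k0, hk02, hk0l, hak0, hja⟩
    rw [hla] at hk0l
    by_cases hek : k0 = k
    · exfalso
      subst hek
      have hb1 := hbdb (k0-1) (by omega)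
      unfold wd at h1 hak0
      omega
    · refine ⟨k0, hk02, by rw [hlb]; exact hk0l, by rw [hagree k0 hek]; exact hak0, ?_⟩
      intro j hj hjl
      rw [hlb] at hjl
      by_cases hej : j = k
      · subst hej
        have := hja j hj (by rw [hla]; exact hjl)
        omega
      · rw [hagree j hej]
        exact hja j hj (by rw [hla]; exact hjl)
  · rintro h2 hna ⟨k0, hk02, hk0l, hbk0, hjb⟩
    apply hna
    rw [hlb] at hk0l
    by_cases hek : k0 = k
    · exfalso
      subst hek
      have ha1 := hbda (k0-1) (by omega)
      unfold wd at h2 hbk0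
      omega
    · refine ⟨k0, hk02, by rw [hla]; exact hk0l, by rw [← hagree k0 hek]; exact hbk0, ?_⟩
      intro j hj hjl
      rw [hla] at hjl
      by_cases hej : j = k
      · subst hej
        have := hjb j hj (by rw [hlb]; exact hjl)
        omega
      · rw [← hagree j hej]
        exact hjb j hj (by rw [hlb]; exact hjl)
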